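/- arXiv:math/0311301 — 2 statements merged into one kernel-verified Lean document; each statement's English description precedes it below -/
import Mathlib

section
/- Let φ(z) = −r·log z + x·log(1+z/x) + 2r·log(1+√(1+z/x)) with 0 < r < x. There exists a constant c > 0 such that whenever r/x ≤ c, the equation φ'(z) = 0 has a solution z₀ satisfying |z₀ − r(1 + r/(2x) + r²/(8x²))| ≤ C·r·(r/x)³ for an absolute constant C. -/
open Real

set_option maxHeartbeats 1000000 in
/-- The saddle point expansion (3.24): there are constants `c, C > 0` such that whenever
`0 < r < x` and `r/x ≤ c`, the equation `φ'(z₀) = 0` has a solution `z₀ > 0` with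
`|z₀ - r(1 + r/(2x) + r²/(8x²))| ≤ C r (r/x)³`. -/
theorem stmt_5 :
    ∃ c > (0 : ℝ), ∃ C > (0 : ℝ), ∀ r x : ℝ, 0 < r → r < x → r / x ≤ c →
      ∃ z₀ > (0 : ℝ),
        deriv (fun w => -r * Real.log w + x * Real.log (1 + w / x)
          + 2 * r * Real.log (1 + Real.sqrt (1 + w / x))) z₀ = 0 ∧
        |z₀ - r * (1 + r / (2 * x) + r ^ 2 / (8 * x ^ 2))| ≤ C * r * (r / x) ^ 3 := by
  refine ⟨1, one_pos, 1, one_pos, fun r x hr hrx _ => ?_⟩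
  have hx : 0 < x := hr.trans hrx
  set D := r ^ 2 + 4 * x ^ 2 with hD
  have hD0 : (0:ℝ) < D := by positivity
  have hsqD : Real.sqrt D ^ 2 = D := Real.sq_sqrt hD0.le
  have hsD_pos : 0 < Real.sqrt D := Real.sqrt_pos.mpr hD0
  set s := (r + Real.sqrt D) / (2 * x) with hs
  have h2x : 2 * x < Real.sqrt D + r := by nlinarith [hsqD, hsD_pos]
  have hs1 : 1 < s := by
    rw [hs, lt_div_iff₀ (by linarith)]; linarith
  have hs0 : (0:ℝ) < s := by linarith
  have hkey : x * s ^ 2 = r * s + x := by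
    rw [hs]; field_simp; nlinarith [hsqD]
  have hz0 : (0:ℝ) < r * s := by positivity
  have hu : 1 + r * s / x = s ^ 2 := by field_simp; linarith [hkey]
  have hune : 1 + r * s / x ≠ 0 := by rw [hu]; positivity
  have hsu : Real.sqrt (1 + r * s / x) = s := by rw [hu, Real.sqrt_sq hs0.le]
  have hlne : 1 + Real.sqrt (1 + r * s / x) ≠ 0 := by rw [hsu]; positivity
  refine ⟨r * s, hz0, ?_, ?_⟩
  · -- derivative is zero
    have hg : HasDerivAt (fun w : ℝ => 1 + w / x) (1 / x) (r * s) := by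
      simpa using ((hasDerivAt_id (r * s)).div_const x).const_add 1
    have h1 : HasDerivAt (fun w : ℝ => -r * Real.log w) (-r * (r * s)⁻¹) (r * s) :=
      (Real.hasDerivAt_log hz0.ne').const_mul (-r)
    have h2 : HasDerivAt (fun w : ℝ => x * Real.log (1 + w / x))
        (x * ((1 + r * s / x)⁻¹ * (1 / x))) (r * s) :=
      by have := ((Real.hasDerivAt_log hune).comp (r * s) hg).const_mul x; exact this
    have hsq : HasDerivAt (fun w : ℝ => 1 + Real.sqrt (1 + w / x))
        (1 / (2 * Real.sqrt (1 + r * s / x)) * (1 / x)) (r * s) :=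
      (((Real.hasDerivAt_sqrt hune).comp (r * s) hg)).const_add 1
    have h3 : HasDerivAt (fun w : ℝ => 2 * r * Real.log (1 + Real.sqrt (1 + w / x)))
        (2 * r * ((1 + Real.sqrt (1 + r * s / x))⁻¹ *
          (1 / (2 * Real.sqrt (1 + r * s / x)) * (1 / x)))) (r * s) :=
      ((Real.hasDerivAt_log hlne).comp (r * s) hsq).const_mul (2 * r)
    have htot := (h1.add h2).add h3
    rw [HasDerivAt.deriv (f := fun w => -r * Real.log w + x * Real.log (1 + w / x) + 2 * r * Real.log (1 + Real.sqrt (1 + w / x))) htot, hsu, hu]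
    have hs2 : (0:ℝ) < s ^ 2 := by positivity
    field_simp
    linear_combination (-1) * hkey
  · -- the estimate
    set A := 2 * x + r ^ 2 / (4 * x) with hA
    set e := r ^ 4 / (64 * x ^ 3) with he
    have he0 : (0:ℝ) ≤ e := by positivity
    have hA2 : A ^ 2 = D + (r ^ 2 / (4 * x)) ^ 2 := by
      rw [hA, hD]; field_simp; ring
    have h_up : Real.sqrt D ≤ A := by
      have h1 : D ≤ A ^ 2 := by rw [hA2]; nlinarith [sq_nonneg (r ^ 2 / (4 * x))]
      have := Real.sqrt_le_sqrt h1
      rwa [Real.sqrt_sq (by positivity : (0:ℝ) ≤ A)] at this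
    have h_low : A - e ≤ Real.sqrt D := by
      have hAe : A - e = (128 * x ^ 4 + 16 * x ^ 2 * r ^ 2 - r ^ 4) / (64 * x ^ 3) := by
        rw [hA, he]; field_simp; ring
      have hpoly : (128 * x ^ 4 + 16 * x ^ 2 * r ^ 2 - r ^ 4) ^ 2 ≤ D * (64 * x ^ 3) ^ 2 := by
        rw [hD]
        have h32 : (0:ℝ) ≤ r ^ 6 * (32 * x ^ 2 - r ^ 2) :=
          mul_nonneg (pow_nonneg hr.le 6) (by nlinarith)
        nlinarith [h32]
      have h1 : (A - e) ^ 2 ≤ D := by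
        rw [hAe, div_pow, div_le_iff₀ (by positivity)]
        exact hpoly
      calc A - e ≤ |A - e| := le_abs_self _
        _ = Real.sqrt ((A - e) ^ 2) := (Real.sqrt_sq_eq_abs _).symm
        _ ≤ Real.sqrt D := Real.sqrt_le_sqrt h1
    have habs : |Real.sqrt D - A| ≤ e :=
      abs_le.mpr ⟨by linarith, by linarith⟩
    have hdiff : r * s - r * (1 + r / (2 * x) + r ^ 2 / (8 * x ^ 2))
        = r / (2 * x) * (Real.sqrt D - A) := by
      rw [hs, hA]; field_simp; ring
    rw [hdiff, abs_mul, abs_of_pos (by positivity : (0:ℝ) < r / (2 * x))]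
    calc r / (2 * x) * |Real.sqrt D - A| ≤ r / (2 * x) * e :=
          mul_le_mul_of_nonneg_left habs (by positivity)
      _ ≤ 1 * r * (r / x) ^ 3 := by
          rw [he, div_pow, one_mul, div_mul_div_comm, ← mul_div_assoc,
            div_le_div_iff₀ (by positivity) (by positivity)]
          nlinarith [mul_nonneg (mul_nonneg (pow_nonneg hr.le 4) (pow_nonneg hx.le 3))
            (by linarith : (0:ℝ) ≤ 128 * x - r)]
end

section
/- Let Y ≥ 2, s = σ+it with σ > 1/2, and suppose E : [Y,∞) → ℝ is continuous with ∫_1^X E(x)² dx ≤ A·X·(log X)^B for all X ≥ 2 (mean square bound). Let w : [Y,∞) → ℝ be C¹ with |w'(x)| ≤ 1/x and |w(x)| ≤ 1. Then the integral ∫_Y^∞ E(x)(w'(x)x^{−s} − s·w(x)x^{−s−1})dx converges absolutely and is ≪ (1+|s|)·Y^{1/2−σ}·(log Y)^{C} for some constant C depending on B. -/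
open MeasureTheory Complex Real

private lemma stmt9_logpow (B : ℝ) : ∃ M > (0:ℝ), ∀ u : ℝ, 2 ≤ u →
    Real.log u ^ B ≤ M * u ^ (1/2 : ℝ) := by
  refine ⟨max (Real.log 2 ^ B) ((2*B) ^ B),
    lt_max_iff.2 (Or.inl (Real.rpow_pos_of_pos (Real.log_pos one_lt_two) B)), ?_⟩
  intro u hu
  have hu0 : (0:ℝ) < u := by linarith
  have hu1 : (1:ℝ) ≤ u ^ (1/2:ℝ) := Real.one_le_rpow (by linarith) (by norm_num)
  have hlogu : 0 < Real.log u := Real.log_pos (by linarith)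
  have hmaxpos : 0 < max (Real.log 2 ^ B) ((2*B) ^ B) :=
    lt_max_iff.2 (Or.inl (Real.rpow_pos_of_pos (Real.log_pos one_lt_two) B))
  rcases le_or_gt B 0 with hB | hB
  · calc Real.log u ^ B ≤ Real.log 2 ^ B :=
        Real.rpow_le_rpow_of_nonpos (Real.log_pos one_lt_two) (Real.log_le_log (by norm_num) hu) hB
      _ = Real.log 2 ^ B * 1 := (mul_one _).symm
      _ ≤ max (Real.log 2 ^ B) ((2*B) ^ B) * u ^ (1/2:ℝ) :=
        mul_le_mul (le_max_left _ _) hu1 zero_le_one hmaxpos.le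
  · have hδ : (0:ℝ) < 1/(2*B) := by positivity
    have h1 : Real.log u ≤ 2*B * u ^ (1/(2*B)) := by
      calc Real.log u ≤ u ^ (1/(2*B)) / (1/(2*B)) := Real.log_le_rpow_div hu0.le hδ
        _ = 2*B * u ^ (1/(2*B)) := by field_simp
    have h3 : (u ^ (1/(2*B):ℝ)) ^ B = u ^ (1/2 : ℝ) := by
      rw [← Real.rpow_mul hu0.le]
      congr 1
      field_simp
    calc Real.log u ^ B ≤ (2*B * u ^ (1/(2*B))) ^ B := Real.rpow_le_rpow hlogu.le h1 hB.le
      _ = (2*B)^B * (u ^ (1/(2*B):ℝ))^B := Real.mul_rpow (by positivity) (by positivity)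
      _ = (2*B)^B * u ^ (1/2:ℝ) := by rw [h3]
      _ ≤ max (Real.log 2 ^ B) ((2*B) ^ B) * u ^ (1/2:ℝ) :=
        mul_le_mul_of_nonneg_right (le_max_right _ _) (by positivity)

private lemma stmt9_amgm (σ : ℝ) {x : ℝ} (hx : 0 < x) (e : ℝ) :
    |e| * x ^ (-σ-1 : ℝ) ≤ x ^ (-σ-1/2 : ℝ) + e^2 * x ^ (-σ-3/2 : ℝ) := by
  have h1 : x ^ (-σ-1:ℝ) = x ^ (1/2:ℝ) * x ^ (-σ-3/2:ℝ) := by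
    rw [← Real.rpow_add hx]; congr 1; ring
  have h2 : x ^ (-σ-1/2:ℝ) = x * x ^ (-σ-3/2:ℝ) := by
    nth_rewrite 1 [show (-σ-1/2:ℝ) = 1 + (-σ-3/2) by ring]
    rw [Real.rpow_add hx, Real.rpow_one]
  have h3 : x ^ (1/2:ℝ) * x ^ (1/2:ℝ) = x := by
    rw [← Real.rpow_add hx]; norm_num
  have h5 : (0:ℝ) ≤ x ^ (-σ-3/2:ℝ) := Real.rpow_nonneg hx.le _
  have h4 : |e| * x ^ (1/2:ℝ) ≤ x + e^2 := by
    nlinarith [sq_nonneg (|e| - x ^ (1/2:ℝ)), _root_.sq_abs e, abs_nonneg e,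
      Real.rpow_nonneg hx.le (1/2:ℝ), mul_nonneg (abs_nonneg e) (Real.rpow_nonneg hx.le (1/2:ℝ))]
  calc |e| * x ^ (-σ-1:ℝ) = (|e| * x ^ (1/2:ℝ)) * x ^ (-σ-3/2:ℝ) := by rw [h1]; ring
    _ ≤ (x + e^2) * x ^ (-σ-3/2:ℝ) := mul_le_mul_of_nonneg_right h4 h5
    _ = x ^ (-σ-1/2:ℝ) + e^2 * x ^ (-σ-3/2:ℝ) := by rw [h2]; ring

/-- Estimation of `Z₆₂(s)`: if `E` has mean square `≪ X log^B X` and `w` is `C¹` with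
`|w| ≤ 1`, `|w'| ≤ 1/x`, then `∫_Y^∞ E(x)(w'(x)x^(-s) - s w(x) x^(-s-1)) dx` converges
absolutely and is `≪ (1+|s|) Y^(1/2-σ) log^C Y`. -/
theorem stmt_9 (A B σ : ℝ) (hA : 0 ≤ A) (hσ : 1 / 2 < σ) :
    ∃ K > (0 : ℝ), ∃ C : ℝ, ∀ (Y t : ℝ) (E w : ℝ → ℝ), 2 ≤ Y →
      Continuous E →
      (∀ X ≥ (2 : ℝ), ∫ x in Set.Icc 1 X, (E x) ^ 2 ≤ A * X * (Real.log X) ^ B) →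
      ContDiff ℝ 1 w → (∀ x ≥ Y, |deriv w x| ≤ 1 / x) → (∀ x, |w x| ≤ 1) →
      IntegrableOn
        (fun x : ℝ => (E x : ℂ) *
          ((Complex.ofReal (deriv w x)) * (x : ℂ) ^ (-((σ : ℂ) + t * Complex.I))
            - ((σ : ℂ) + t * Complex.I) * (w x : ℂ) * (x : ℂ) ^ (-((σ : ℂ) + t * Complex.I) - 1)))
        (Set.Ici Y) ∧
      ‖∫ x in Set.Ici Y, (E x : ℂ) *
          ((Complex.ofReal (deriv w x)) * (x : ℂ) ^ (-((σ : ℂ) + t * Complex.I))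
            - ((σ : ℂ) + t * Complex.I) * (w x : ℂ) * (x : ℂ) ^ (-((σ : ℂ) + t * Complex.I) - 1))‖
        ≤ K * (1 + ‖(σ : ℂ) + t * Complex.I‖) * Y ^ (1 / 2 - σ) * (Real.log Y) ^ C := by
  obtain ⟨M, hM0, hMle⟩ := stmt9_logpow B
  have hσ' : 0 < σ - 1/2 := by linarith
  have hσ0 : 0 < σ := by linarith
  have hAM : 0 ≤ A*M := mul_nonneg hA hM0.le
  set K : ℝ := 1/(σ-1/2) + A*M*(1 + (σ+3/2)/σ) with hK
  have hKpos : 0 < K := by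
    have h1 : 0 < 1/(σ-1/2) := by positivity
    have h2 : 0 ≤ A*M*(1 + (σ+3/2)/σ) := by
      apply mul_nonneg hAM; positivity
    rw [hK]; linarith
  refine ⟨K, hKpos, 0, ?_⟩
  intro Y t E w hY hE hEsq hw hw'le hwle
  set s : ℂ := (σ:ℂ) + t*Complex.I with hs
  have hY0 : (0:ℝ) < Y := by linarith
  have hY1 : (1:ℝ) ≤ Y := by linarith
  set F : ℝ → ℂ := fun x : ℝ => (E x : ℂ) *
      ((Complex.ofReal (deriv w x)) * (x : ℂ) ^ (-s)
        - s * (w x : ℂ) * (x : ℂ) ^ (-s - 1)) with hF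
  have hS0 : (0:ℝ) ≤ 1 + ‖s‖ := by positivity
  -- pointwise norm bound
  have hnorm : ∀ x : ℝ, Y ≤ x → ‖F x‖ ≤
      (1 + ‖s‖) * (x ^ (-σ-1/2:ℝ) + E x ^ 2 * x ^ (-σ-3/2:ℝ)) := by
    intro x hx
    have hx0 : (0:ℝ) < x := by linarith
    have hre1 : (-s).re = -σ := by simp [hs]
    have hre2 : (-s-1).re = -σ-1 := by simp [hs]
    have hcpow1 : ‖(x:ℂ) ^ (-s)‖ = x ^ (-σ:ℝ) := by
      rw [Complex.norm_cpow_eq_rpow_re_of_pos hx0, hre1]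
    have hcpow2 : ‖(x:ℂ) ^ (-s-1)‖ = x ^ (-σ-1:ℝ) := by
      rw [Complex.norm_cpow_eq_rpow_re_of_pos hx0, hre2]
    have hxm : (1/x) * x ^ (-σ:ℝ) = x ^ (-σ-1:ℝ) := by
      rw [show (-σ-1:ℝ) = -σ + (-1) by ring, Real.rpow_add hx0, Real.rpow_neg_one]; ring
    have hinner : ‖(Complex.ofReal (deriv w x)) * (x:ℂ) ^ (-s)
        - s * (w x:ℂ) * (x:ℂ) ^ (-s-1)‖ ≤ (1 + ‖s‖) * x ^ (-σ-1:ℝ) := by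
      calc ‖(Complex.ofReal (deriv w x)) * (x:ℂ) ^ (-s) - s * (w x:ℂ) * (x:ℂ) ^ (-s-1)‖
          ≤ ‖(Complex.ofReal (deriv w x)) * (x:ℂ) ^ (-s)‖ + ‖s * (w x:ℂ) * (x:ℂ) ^ (-s-1)‖ :=
            norm_sub_le _ _
        _ = |deriv w x| * x ^ (-σ:ℝ) + ‖s‖ * (|w x| * x ^ (-σ-1:ℝ)) := by
            simp only [norm_mul, Complex.norm_real, Real.norm_eq_abs, hcpow1, hcpow2]
            ring
        _ ≤ (1/x) * x ^ (-σ:ℝ) + ‖s‖ * (1 * x ^ (-σ-1:ℝ)) := by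
            gcongr
            · exact hw'le x hx
            · exact hwle x
        _ = (1 + ‖s‖) * x ^ (-σ-1:ℝ) := by rw [hxm]; ring
    calc ‖F x‖ = |E x| * ‖(Complex.ofReal (deriv w x)) * (x:ℂ) ^ (-s)
          - s * (w x:ℂ) * (x:ℂ) ^ (-s-1)‖ := by
          rw [hF]; simp only [norm_mul, Complex.norm_real, Real.norm_eq_abs]
      _ ≤ |E x| * ((1 + ‖s‖) * x ^ (-σ-1:ℝ)) :=
          mul_le_mul_of_nonneg_left hinner (abs_nonneg _)
      _ = (1 + ‖s‖) * (|E x| * x ^ (-σ-1:ℝ)) := by ring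
      _ ≤ (1 + ‖s‖) * (x ^ (-σ-1/2:ℝ) + E x ^ 2 * x ^ (-σ-3/2:ℝ)) :=
          mul_le_mul_of_nonneg_left (stmt9_amgm σ hx0 (E x)) hS0
  -- continuity of F
  have hwc : Continuous (deriv w) := hw.continuous_deriv le_rfl
  have hcpowc : ∀ c : ℂ, ContinuousOn (fun x:ℝ => (x:ℂ) ^ c) (Set.Ici Y) := fun c x hx =>
    (Complex.continuousAt_ofReal_cpow_const x c
      (Or.inr (ne_of_gt (lt_of_lt_of_le hY0 hx)))).continuousWithinAt
  have hFc : ContinuousOn F (Set.Ici Y) := by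
    rw [hF]
    apply ContinuousOn.mul (Complex.continuous_ofReal.comp hE).continuousOn
    apply ContinuousOn.sub
    · exact (Complex.continuous_ofReal.comp hwc).continuousOn.mul (hcpowc (-s))
    · exact (continuous_const.mul (Complex.continuous_ofReal.comp hw.continuous)).continuousOn.mul
        (hcpowc (-s-1))
  have hE2 : Continuous fun x : ℝ => E x ^ 2 := hE.pow 2
  set G : ℝ → ℝ := fun u => ∫ x in Y..u, E x ^ 2 with hG
  have hGderiv : ∀ u : ℝ, HasDerivAt G (E u ^ 2) u := fun u =>
    intervalIntegral.integral_hasDerivAt_right (hE2.intervalIntegrable Y u)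
      (hE2.stronglyMeasurableAtFilter _ _) hE2.continuousAt
  have hGcont : Continuous G := continuous_iff_continuousAt.mpr fun u => (hGderiv u).continuousAt
  have hG0 : ∀ u : ℝ, Y ≤ u → G u ≤ A*M*u^(3/2:ℝ) := by
    intro u hu
    have hu2 : (2:ℝ) ≤ u := le_trans hY hu
    have hu0 : (0:ℝ) < u := by linarith
    have h1 : G u = ∫ x in Set.Ioc Y u, E x ^ 2 := intervalIntegral.integral_of_le hu
    have h2 : (∫ x in Set.Ioc Y u, E x ^ 2) ≤ ∫ x in Set.Icc 1 u, E x ^ 2 := by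
      apply setIntegral_mono_set hE2.integrableOn_Icc
        (Filter.Eventually.of_forall fun x => sq_nonneg (E x))
      exact HasSubset.Subset.eventuallyLE (fun x hx => ⟨by linarith [hx.1], hx.2⟩)
    have h3 := hEsq u hu2
    have h6 : u^(1/2:ℝ) * u = u^(3/2:ℝ) := by
      rw [show (3/2:ℝ) = 1/2 + 1 by norm_num, Real.rpow_add hu0, Real.rpow_one]
    have h4 : A * u * Real.log u ^ B ≤ A*M*u^(3/2:ℝ) := by
      calc A * u * Real.log u ^ B ≤ A * u * (M * u^(1/2:ℝ)) :=
            mul_le_mul_of_nonneg_left (hMle u hu2) (mul_nonneg hA (by linarith))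
        _ = A*M*(u^(1/2:ℝ)*u) := by ring
        _ = A*M*u^(3/2:ℝ) := by rw [h6]
    linarith [h1.le, h1.ge]
  -- main integral estimate for E^2 * x^(-σ-3/2)
  have hEint : ∀ T : ℝ, Y ≤ T →
      (∫ x in Y..T, E x ^ 2 * x ^ (-σ-3/2:ℝ)) ≤ A*M*(1+(σ+3/2)/σ) * Y^(-σ:ℝ) := by
    intro T hT
    have hT0 : (0:ℝ) < T := lt_of_lt_of_le hY0 hT
    have huIcc : Set.uIcc Y T = Set.Icc Y T := Set.uIcc_of_le hT
    have hpos : ∀ x ∈ Set.uIcc Y T, (0:ℝ) < x := by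
      rw [huIcc]; intro x hx; linarith [hx.1]
    have hv : ∀ x ∈ Set.uIcc Y T,
        HasDerivAt (fun y:ℝ => y^(-σ-3/2:ℝ)) ((-σ-3/2) * x^(-σ-3/2-1:ℝ)) x :=
      fun x hx => Real.hasDerivAt_rpow_const (Or.inl (hpos x hx).ne')
    have hrpc : ∀ r : ℝ, ContinuousOn (fun x:ℝ => x ^ r) (Set.uIcc Y T) := fun r x hx =>
      (Real.continuousAt_rpow_const x r (Or.inl (hpos x hx).ne')).continuousWithinAt
    have hu' : IntervalIntegrable (fun x => E x ^ 2) volume Y T := hE2.intervalIntegrable Y T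
    have hv' : IntervalIntegrable (fun x => (-σ-3/2) * x^(-σ-3/2-1:ℝ)) volume Y T :=
      (continuousOn_const.mul (hrpc _)).intervalIntegrable
    have hIBP := intervalIntegral.integral_mul_deriv_eq_deriv_mul
      (fun x _ => hGderiv x) hv hu' hv'
    have hGY : G Y = 0 := intervalIntegral.integral_same
    rw [hGY, zero_mul, sub_zero] at hIBP
    have p1 : G T * T ^ (-σ-3/2:ℝ) ≤ A*M*Y^(-σ:ℝ) := by
      calc G T * T ^ (-σ-3/2:ℝ) ≤ (A*M*T^(3/2:ℝ)) * T ^ (-σ-3/2:ℝ) :=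
            mul_le_mul_of_nonneg_right (hG0 T hT) (Real.rpow_nonneg hT0.le _)
        _ = A*M*(T^(3/2:ℝ) * T^(-σ-3/2:ℝ)) := by ring
        _ = A*M*T^(-σ:ℝ) := by
            rw [← Real.rpow_add hT0, show (3/2 + (-σ-3/2):ℝ) = -σ by ring]
        _ ≤ A*M*Y^(-σ:ℝ) := mul_le_mul_of_nonneg_left
            (Real.rpow_le_rpow_of_nonpos hY0 hT (by linarith)) hAM
    have p2 : -(∫ x in Y..T, G x * ((-σ-3/2) * x^(-σ-3/2-1:ℝ)))
        ≤ (σ+3/2) * (A*M) * (Y^(-σ:ℝ)/σ) := by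
      have heq : -(∫ x in Y..T, G x * ((-σ-3/2) * x^(-σ-3/2-1:ℝ)))
          = ∫ x in Y..T, (σ+3/2) * x^(-σ-3/2-1:ℝ) * G x := by
        rw [← intervalIntegral.integral_neg]
        congr 1; funext x; ring
      rw [heq]
      have hint1 : IntervalIntegrable (fun x:ℝ => (σ+3/2) * x^(-σ-3/2-1:ℝ) * G x) volume Y T :=
        (((continuousOn_const.mul (hrpc _))).mul hGcont.continuousOn).intervalIntegrable
      have hint2 : IntervalIntegrable (fun x:ℝ => (σ+3/2) * (A*M) * x^(-σ-1:ℝ)) volume Y T :=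
        (continuousOn_const.mul (hrpc _)).intervalIntegrable
      have hmono : (∫ x in Y..T, (σ+3/2) * x^(-σ-3/2-1:ℝ) * G x)
          ≤ ∫ x in Y..T, (σ+3/2) * (A*M) * x^(-σ-1:ℝ) := by
        apply intervalIntegral.integral_mono_on hT hint1 hint2
        intro x hx
        have hx0 : (0:ℝ) < x := lt_of_lt_of_le hY0 hx.1
        calc (σ+3/2) * x^(-σ-3/2-1:ℝ) * G x
            ≤ (σ+3/2) * x^(-σ-3/2-1:ℝ) * (A*M*x^(3/2:ℝ)) := by
              apply mul_le_mul_of_nonneg_left (hG0 x hx.1)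
              exact mul_nonneg (by linarith) (Real.rpow_nonneg hx0.le _)
          _ = (σ+3/2)*(A*M) * (x^(-σ-3/2-1:ℝ) * x^(3/2:ℝ)) := by ring
          _ = (σ+3/2)*(A*M) * x^(-σ-1:ℝ) := by
              rw [← Real.rpow_add hx0, show (-σ-3/2-1 + 3/2:ℝ) = -σ-1 by ring]
      have hrval : (∫ x in Y..T, x^(-σ-1:ℝ)) ≤ Y^(-σ:ℝ)/σ := by
        rw [integral_rpow (Or.inr ⟨by intro h; linarith,
          by rw [huIcc]; intro h; exact absurd h.1 (by linarith)⟩)]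
        rw [show (-σ-1+1:ℝ) = -σ by ring]
        have hTn : (0:ℝ) ≤ T^(-σ:ℝ) := Real.rpow_nonneg hT0.le _
        have heq2 : (T^(-σ:ℝ) - Y^(-σ:ℝ))/(-σ) = (Y^(-σ:ℝ) - T^(-σ:ℝ))/σ := by
          rw [div_neg, ← neg_div]; congr 1; ring
        rw [heq2]
        exact (div_le_div_iff_of_pos_right hσ0).mpr (by linarith)
      calc (∫ x in Y..T, (σ+3/2) * x^(-σ-3/2-1:ℝ) * G x)
          ≤ ∫ x in Y..T, (σ+3/2) * (A*M) * x^(-σ-1:ℝ) := hmono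
        _ = (σ+3/2) * (A*M) * ∫ x in Y..T, x^(-σ-1:ℝ) := by
            rw [intervalIntegral.integral_const_mul]
        _ ≤ (σ+3/2) * (A*M) * (Y^(-σ:ℝ)/σ) :=
            mul_le_mul_of_nonneg_left hrval (mul_nonneg (by linarith) hAM)
    have hfinal : A*M*Y^(-σ:ℝ) + (σ+3/2)*(A*M)*(Y^(-σ:ℝ)/σ)
        = A*M*(1+(σ+3/2)/σ) * Y^(-σ:ℝ) := by field_simp
    linarith
  -- main bound on finite intervals
  have hmain : ∀ T : ℝ, Y ≤ T →
      (∫ x in Y..T, ‖F x‖) ≤ (1+‖s‖) * K * Y^(1/2-σ:ℝ) := by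
    intro T hT
    have hT0 : (0:ℝ) < T := lt_of_lt_of_le hY0 hT
    have huIcc : Set.uIcc Y T = Set.Icc Y T := Set.uIcc_of_le hT
    have hpos : ∀ x ∈ Set.uIcc Y T, (0:ℝ) < x := by
      rw [huIcc]; intro x hx; linarith [hx.1]
    have hrpc : ∀ r : ℝ, ContinuousOn (fun x:ℝ => x ^ r) (Set.uIcc Y T) := fun r x hx =>
      (Real.continuousAt_rpow_const x r (Or.inl (hpos x hx).ne')).continuousWithinAt
    have hsub : Set.uIcc Y T ⊆ Set.Ici Y := by rw [huIcc]; exact Set.Icc_subset_Ici_self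
    have hFi : IntervalIntegrable (fun x => ‖F x‖) volume Y T :=
      ((hFc.mono hsub).norm).intervalIntegrable
    have hg1 : IntervalIntegrable (fun x:ℝ => x ^ (-σ-1/2:ℝ)) volume Y T :=
      (hrpc _).intervalIntegrable
    have hg2 : IntervalIntegrable (fun x:ℝ => E x ^ 2 * x ^ (-σ-3/2:ℝ)) volume Y T :=
      (hE2.continuousOn.mul (hrpc _)).intervalIntegrable
    have hg : IntervalIntegrable
        (fun x:ℝ => (1+‖s‖) * (x ^ (-σ-1/2:ℝ) + E x ^ 2 * x ^ (-σ-3/2:ℝ)))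
        volume Y T := (hg1.add hg2).const_mul _
    have step1 : (∫ x in Y..T, ‖F x‖)
        ≤ ∫ x in Y..T, (1+‖s‖) * (x ^ (-σ-1/2:ℝ) + E x ^ 2 * x ^ (-σ-3/2:ℝ)) := by
      apply intervalIntegral.integral_mono_on hT hFi hg
      intro x hx; exact hnorm x hx.1
    have step2 : (∫ x in Y..T, (1+‖s‖) * (x ^ (-σ-1/2:ℝ) + E x ^ 2 * x ^ (-σ-3/2:ℝ)))
        = (1+‖s‖) * ((∫ x in Y..T, x ^ (-σ-1/2:ℝ))
            + ∫ x in Y..T, E x ^ 2 * x ^ (-σ-3/2:ℝ)) := by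
      rw [intervalIntegral.integral_const_mul, intervalIntegral.integral_add hg1 hg2]
    have step3 : (∫ x in Y..T, x ^ (-σ-1/2:ℝ)) ≤ Y^(1/2-σ:ℝ)/(σ-1/2) := by
      rw [integral_rpow (Or.inr ⟨by intro h; linarith,
        by rw [huIcc]; intro h; exact absurd h.1 (by linarith)⟩)]
      rw [show (-σ-1/2+1:ℝ) = 1/2-σ by ring]
      have h1 : (0:ℝ) ≤ T^(1/2-σ:ℝ) := Real.rpow_nonneg hT0.le _
      have heq : (T^(1/2-σ:ℝ) - Y^(1/2-σ:ℝ))/(1/2-σ) = (Y^(1/2-σ:ℝ) - T^(1/2-σ:ℝ))/(σ-1/2) := by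
        rw [show (1/2-σ:ℝ) = -(σ-1/2) by ring, div_neg, ← neg_div]; congr 1; ring
      rw [heq]
      exact (div_le_div_iff_of_pos_right hσ').mpr (by linarith)
    have hYexp : Y^(-σ:ℝ) ≤ Y^(1/2-σ:ℝ) :=
      Real.rpow_le_rpow_of_exponent_le hY1 (by linarith)
    calc (∫ x in Y..T, ‖F x‖)
        ≤ ∫ x in Y..T, (1+‖s‖) * (x ^ (-σ-1/2:ℝ) + E x ^ 2 * x ^ (-σ-3/2:ℝ)) := step1
      _ = (1+‖s‖) * ((∫ x in Y..T, x ^ (-σ-1/2:ℝ))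
            + ∫ x in Y..T, E x ^ 2 * x ^ (-σ-3/2:ℝ)) := step2
      _ ≤ (1+‖s‖) * (Y^(1/2-σ:ℝ)/(σ-1/2) + A*M*(1+(σ+3/2)/σ) * Y^(-σ:ℝ)) :=
          mul_le_mul_of_nonneg_left (add_le_add step3 (hEint T hT)) hS0
      _ ≤ (1+‖s‖) * (K * Y^(1/2-σ:ℝ)) := by
          apply mul_le_mul_of_nonneg_left _ hS0
          rw [hK]
          have h2 : 0 ≤ A*M*(1+(σ+3/2)/σ) := mul_nonneg hAM (by positivity)
          have h3 := mul_le_mul_of_nonneg_left hYexp h2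
          calc Y^(1/2-σ:ℝ)/(σ-1/2) + A*M*(1+(σ+3/2)/σ) * Y^(-σ:ℝ)
              ≤ Y^(1/2-σ:ℝ)/(σ-1/2) + A*M*(1+(σ+3/2)/σ) * Y^(1/2-σ:ℝ) := by linarith
            _ = (1/(σ-1/2) + A*M*(1+(σ+3/2)/σ)) * Y^(1/2-σ:ℝ) := by ring
      _ = (1+‖s‖) * K * Y^(1/2-σ:ℝ) := by ring
  -- integrability
  have hb : Filter.Tendsto (fun n : ℕ => Y + (n:ℝ)) Filter.atTop Filter.atTop :=
    Filter.tendsto_atTop_add_const_left _ Y tendsto_natCast_atTop_atTop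
  have hIocInt : ∀ n : ℕ, IntegrableOn F (Set.Ioc Y (Y + (n:ℝ))) := by
    intro n
    exact ((hFc.mono Set.Icc_subset_Ici_self).integrableOn_Icc).mono_set Set.Ioc_subset_Icc_self
  have hIoi : IntegrableOn F (Set.Ioi Y) :=
    integrableOn_Ioi_of_intervalIntegral_norm_bounded ((1+‖s‖) * K * Y^(1/2-σ:ℝ)) Y
      hIocInt hb (Filter.Eventually.of_forall fun n =>
        hmain (Y + n) (le_add_of_nonneg_right (Nat.cast_nonneg n)))
  have hIci : IntegrableOn F (Set.Ici Y) := Iff.mpr integrableOn_Ici_iff_integrableOn_Ioi hIoi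
  refine ⟨hIci, ?_⟩
  have hnormint : ‖∫ x in Set.Ici Y, F x‖ ≤ (1+‖s‖) * K * Y^(1/2-σ:ℝ) := by
    rw [MeasureTheory.integral_Ici_eq_integral_Ioi]
    refine le_trans (norm_integral_le_integral_norm _) ?_
    have htend := intervalIntegral_tendsto_integral_Ioi Y hIoi.norm hb
    exact le_of_tendsto htend (Filter.Eventually.of_forall fun n =>
      hmain (Y + n) (le_add_of_nonneg_right (Nat.cast_nonneg n)))
  calc ‖∫ x in Set.Ici Y, F x‖ ≤ (1+‖s‖) * K * Y^(1/2-σ:ℝ) := hnormint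
    _ = K * (1 + ‖s‖) * Y ^ (1/2 - σ) * Real.log Y ^ (0:ℝ) := by
        rw [Real.rpow_zero, mul_one]; ring
end
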